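/- Let α ∈ (0,1], c, τ > 0, and define η_n = c n^{-α} for n ≥ 1. Let (s_n) be a sequence of nonnegative reals satisfying s_{n+1} ≤ (1 - η_n) s_n + τ η_n² for all n ≥ 1. Let n₀ > 1 be the smallest integer such that η_n ≤ 1 for all n ≥ n₀, and set t = 1 - 2^{α-1}. Then for α = 1 and every n ≥ 2n₀, s_{n+1} ≤ s_{n₀}(n₀/(n+1))^c + (τ c²/(n+1)^c)(1 + 1/n₀)^c · φ_{c-1}(n), where φ_γ(x) = (x^γ - 1)/γ if γ ≠ 0 and φ_0(x) = log x. -/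

import Mathlib

noncomputable def chungPhi (c : ℝ) (x : ℝ) : ℝ :=
  if c = 0 then Real.log x else (x ^ c - 1) / c


open Finset in
private lemma tel_sum (f : ℕ → ℝ) : ∀ (n a : ℕ), a ≤ n + 1 →
    ∑ k ∈ Finset.Icc a n, (f (k+1) - f k) = f (n+1) - f a := by
  intro n
  induction n with
  | zero =>
    intro a ha
    interval_cases a <;> simp
  | succ n ih =>
    intro a ha
    rcases Nat.lt_or_ge a (n+2) with h | h
    · rw [Finset.sum_Icc_succ_top (Nat.lt_succ_iff.mp h), ih a (Nat.lt_succ_iff.mp h)]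
      ring
    · have : a = n + 2 := le_antisymm ha h
      subst this
      simp

private lemma tel_prod : ∀ (n a : ℕ), 1 ≤ a → a ≤ n + 1 →
    ∏ j ∈ Finset.Icc a n, ((j:ℝ)/((j:ℝ)+1)) = (a:ℝ)/((n:ℝ)+1) := by
  intro n
  induction n with
  | zero =>
    intro a h1 ha
    interval_cases a <;> simp
  | succ n ih =>
    intro a h1 ha
    rcases Nat.lt_or_ge a (n+2) with h | h
    · have h' : a ≤ n + 1 := Nat.lt_succ_iff.mp h
      rw [Finset.prod_Icc_succ_top h', ih a h1 h']
      have h1 : ((n:ℝ)+1) ≠ 0 := by positivity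
      push_cast
      field_simp
    · have : a = n + 2 := le_antisymm ha h
      subst this
      rw [show n+2 = (n+1)+1 from rfl, Finset.Icc_eq_empty (by omega), Finset.prod_empty]
      push_cast
      rw [eq_div_iff (by positivity)]
      ring

private lemma tel_prod' : ∀ (n a : ℕ), 1 ≤ n → 2 ≤ a → a ≤ n + 1 →
    ∏ j ∈ Finset.Icc a n, (((j:ℝ)-1)/(j:ℝ)) = ((a:ℝ)-1)/(n:ℝ) := by
  intro n
  induction n with
  | zero => intro a h; omega
  | succ n ih =>
    intro a hn h2 ha
    rcases Nat.lt_or_ge a (n+2) with h | h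
    · have h' : a ≤ n + 1 := Nat.lt_succ_iff.mp h
      have hn1 : 1 ≤ n := by omega
      rw [Finset.prod_Icc_succ_top h', ih a hn1 h2 h']
      have h1 : ((n:ℝ)) ≠ 0 := by positivity
      push_cast
      field_simp
      ring
    · have : a = n + 2 := le_antisymm ha h
      subst this
      rw [show n+2 = (n+1)+1 from rfl, Finset.Icc_eq_empty (by omega), Finset.prod_empty]
      push_cast
      rw [eq_div_iff (by positivity)]
      ring

private lemma key_pointwise {c x : ℝ} (hc : 0 < c) (hx : 1 ≤ x) :
    1 - c / x ≤ (x / (x + 1)) ^ c := by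
  have hx0 : (0:ℝ) < x := lt_of_lt_of_le one_pos hx
  have h0 : (0:ℝ) < 1 + 1/x := by positivity
  have h1 : (1 + 1/x) ^ c ≤ Real.exp (c / x) := by
    have h2 : (1:ℝ) + 1/x ≤ Real.exp (1/x) := by
      have := Real.add_one_le_exp (1/x); linarith
    calc (1 + 1/x) ^ c ≤ (Real.exp (1/x)) ^ c :=
          Real.rpow_le_rpow (by positivity) h2 hc.le
      _ = Real.exp (c / x) := by
          rw [← Real.exp_mul, one_div, inv_mul_eq_div]
  have h3 : 1 - c / x ≤ Real.exp (-(c/x)) := by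
    have := Real.add_one_le_exp (-(c/x)); linarith
  have h4 : Real.exp (-(c/x)) ≤ ((1 + 1/x) ^ c)⁻¹ := by
    rw [Real.exp_neg]
    exact inv_anti₀ (by positivity) h1
  have h5 : ((1 + 1/x) ^ c)⁻¹ = (x / (x+1)) ^ c := by
    rw [← Real.inv_rpow h0.le]
    congr 1
    field_simp
  linarith [h3.trans (h4.trans_eq h5)]

private lemma key_pointwise' {c x : ℝ} (hc : 1 ≤ c) (hx : 1 ≤ x) :
    1 - c / x ≤ ((x - 1) / x) ^ c := by
  have hx0 : (0:ℝ) < x := lt_of_lt_of_le one_pos hx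
  have hs : (-1:ℝ) ≤ -(1/x) := by
    rw [neg_le_neg_iff]
    exact div_le_one_of_le₀ hx hx0.le
  have := one_add_mul_self_le_rpow_one_add hs hc
  have he : (1 + -(1/x)) = (x - 1)/x := by field_simp; ring
  rw [he] at this
  have : 1 - c/x ≤ ((x-1)/x) ^ c := by
    refine le_trans (le_of_eq ?_) this
    field_simp
    ring
  exact this

private lemma chungPhi_aux_nonneg {γ x : ℝ} (hx : 1 ≤ x) (hγ : γ ≠ 0) :
    0 ≤ (x ^ γ - 1) / γ := by
  rcases lt_or_gt_of_ne hγ with h | h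
  · apply div_nonneg_of_nonpos _ h.le
    have : x ^ γ ≤ 1 := Real.rpow_le_one_of_one_le_of_nonpos hx h.le
    linarith
  · apply div_nonneg _ h.le
    have : (1:ℝ) ≤ x ^ γ := Real.one_le_rpow hx h.le
    linarith

private lemma pow_step {γ : ℝ} (hγ : 1 ≤ γ) {k : ℝ} (hk : 1 ≤ k) :
    k ^ (γ - 1) ≤ ((k + 1) ^ γ - k ^ γ) / γ := by
  have hk0 : (0:ℝ) < k := lt_of_lt_of_le one_pos hk
  have hγ0 : (0:ℝ) < γ := lt_of_lt_of_le one_pos hγ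
  have hs : (-1:ℝ) ≤ 1/k := by
    have : (0:ℝ) ≤ 1/k := by positivity
    linarith
  have hb := one_add_mul_self_le_rpow_one_add hs hγ
  have hmul : (k + 1) ^ γ = k ^ γ * (1 + 1/k) ^ γ := by
    rw [← Real.mul_rpow hk0.le (by positivity)]
    congr 1
    field_simp
  have hpow : k ^ (γ - 1) = k ^ γ / k := by
    rw [Real.rpow_sub hk0, Real.rpow_one]
  have h1 : k ^ γ * (1 + γ * (1/k)) ≤ (k+1) ^ γ := by
    rw [hmul]
    exact mul_le_mul_of_nonneg_left hb (Real.rpow_nonneg hk0.le γ)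
  have h2 : k ^ γ * (1 + γ * (1/k)) = k ^ γ + γ * (k ^ γ / k) := by
    field_simp
  rw [hpow, le_div_iff₀ hγ0]
  linarith

private lemma phi_step {c : ℝ} (hc : 0 < c) (hc2 : c ≤ 2) {k : ℝ} (hk : 2 ≤ k) :
    k ^ (c - 2) ≤ chungPhi (c-1) k - chungPhi (c-1) (k - 1) := by
  have hk0 : (0:ℝ) < k := by linarith
  have hk1 : (0:ℝ) < k - 1 := by linarith
  have hr : (k-1)/k < 1 := by rw [div_lt_one hk0]; linarith
  have hr0 : (0:ℝ) < (k-1)/k := by positivity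
  by_cases h1 : c = 1
  · subst h1
    have e0 : (1:ℝ) - 1 = 0 := by norm_num
    rw [e0]
    have e1 : chungPhi 0 k = Real.log k := by simp [chungPhi]
    have e2 : chungPhi 0 (k-1) = Real.log (k-1) := by simp [chungPhi]
    rw [e1, e2]
    have e3 : Real.log k - Real.log (k-1) = - Real.log ((k-1)/k) := by
      rw [Real.log_div hk1.ne' hk0.ne']
      ring
    rw [e3]
    have hlog : Real.log ((k-1)/k) ≤ (k-1)/k - 1 := Real.log_le_sub_one_of_pos hr0
    have he : (k:ℝ) ^ ((1:ℝ) - 2) = k⁻¹ := by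
      norm_num
      exact Real.rpow_neg_one k
    rw [he]
    have e4 : (k-1)/k - 1 = -k⁻¹ := by field_simp; ring
    rw [e4] at hlog
    linarith
  · have hγ : c - 1 ≠ 0 := fun h => h1 (by linarith)
    simp only [chungPhi, if_neg hγ]
    rw [div_sub_div_same]
    have hmul : (k - 1) ^ (c-1) = k ^ (c-1) * ((k-1)/k) ^ (c-1) := by
      rw [← Real.mul_rpow hk0.le hr0.le]
      congr 1
      field_simp
    have hpow : k ^ (c - 2) = k ^ (c-1) / k := by
      rw [show c - 2 = (c-1) - 1 by ring, Real.rpow_sub hk0, Real.rpow_one]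
    have hexpand : k ^ (c-1) * (1 + (c-1) * (-(1/k))) = k ^ (c-1) - (c-1) * (k ^ (c-1) / k) := by
      field_simp
      ring
    rcases lt_or_gt_of_ne hγ with hneg | hpos
    · rw [hpow, le_div_iff_of_neg hneg]
      have hlb : 1 + (c-1) * (-(1/k)) ≤ ((k-1)/k) ^ (c-1) := by
        have hlog : Real.log ((k-1)/k) ≤ (k-1)/k - 1 := Real.log_le_sub_one_of_pos hr0
        have hm : (c-1) * Real.log ((k-1)/k) ≥ (c-1) * ((k-1)/k - 1) :=
          mul_le_mul_of_nonpos_left hlog hneg.le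
        have hexp : Real.exp ((c-1) * Real.log ((k-1)/k)) = ((k-1)/k) ^ (c-1) := by
          rw [Real.rpow_def_of_pos hr0]
          ring_nf
        have hae := Real.add_one_le_exp ((c-1) * Real.log ((k-1)/k))
        have he2 : (k-1)/k - 1 = -(1/k) := by field_simp; ring
        rw [he2] at hm
        linarith [hexp ▸ hae]
      have hfin : k ^ (c-1) * (1 + (c-1) * (-(1/k))) ≤ (k-1) ^ (c-1) := by
        rw [hmul]
        exact mul_le_mul_of_nonneg_left hlb (Real.rpow_nonneg hk0.le _)
      rw [hexpand] at hfin
      linarith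
    · rw [hpow, le_div_iff₀ hpos]
      have hub : ((k-1)/k) ^ (c-1) ≤ 1 + (c-1) * (-(1/k)) := by
        have hs : (-1:ℝ) ≤ -(1/k) := by
          rw [neg_le_neg_iff]
          apply div_le_one_of_le₀ <;> linarith
        have hγ1 : c - 1 ≤ 1 := by linarith
        have hB := rpow_one_add_le_one_add_mul_self hs hpos.le hγ1
        have he : (1 + -(1/k)) = (k-1)/k := by field_simp; ring
        rwa [he] at hB
      have hfin : (k-1) ^ (c-1) ≤ k ^ (c-1) * (1 + (c-1) * (-(1/k))) := by
        rw [hmul]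
        exact mul_le_mul_of_nonneg_left hub (Real.rpow_nonneg hk0.le _)
      rw [hexpand] at hfin
      linarith

private lemma gronwall (η s : ℕ → ℝ) (τ : ℝ)
    (hrec : ∀ n : ℕ, 1 ≤ n → s (n + 1) ≤ (1 - η n) * s n + τ * η n ^ 2)
    (n₀ : ℕ) (hn₀ : 1 ≤ n₀) (hη1 : ∀ n, n₀ ≤ n → η n ≤ 1) :
    ∀ n, n₀ ≤ n → s (n+1) ≤ s n₀ * ∏ j ∈ Finset.Icc n₀ n, (1 - η j)
      + ∑ k ∈ Finset.Icc n₀ n, τ * η k ^ 2 * ∏ j ∈ Finset.Icc (k+1) n, (1 - η j) := by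
  intro n hn
  induction n, hn using Nat.le_induction with
  | base =>
    rw [Finset.Icc_self, Finset.prod_singleton, Finset.sum_singleton,
      Finset.Icc_eq_empty (by omega), Finset.prod_empty]
    have := hrec n₀ hn₀
    rw [mul_comm (1 - η n₀) (s n₀)] at this
    linarith
  | succ n hn ih =>
    have h1 : (1:ℕ) ≤ n + 1 := by omega
    have hle : 0 ≤ 1 - η (n+1) := by
      have := hη1 (n+1) (by omega); linarith
    have step := hrec (n+1) h1
    have h2 : s (n+1+1) ≤ (1 - η (n+1)) * (s n₀ * ∏ j ∈ Finset.Icc n₀ n, (1 - η j)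
        + ∑ k ∈ Finset.Icc n₀ n, τ * η k ^ 2 * ∏ j ∈ Finset.Icc (k+1) n, (1 - η j))
        + τ * η (n+1) ^ 2 := by
      calc s (n+1+1) ≤ (1 - η (n+1)) * s (n+1) + τ * η (n+1) ^ 2 := step
        _ ≤ _ := by
          have := mul_le_mul_of_nonneg_left ih hle
          linarith
    refine h2.trans (le_of_eq ?_)
    rw [Finset.prod_Icc_succ_top (by omega : n₀ ≤ n + 1),
      Finset.sum_Icc_succ_top (by omega : n₀ ≤ n + 1)]
    rw [Finset.Icc_eq_empty (by omega : ¬ (n+1+1) ≤ n+1), Finset.prod_empty]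
    have hsum : ∑ k ∈ Finset.Icc n₀ n, τ * η k ^ 2 * ∏ j ∈ Finset.Icc (k+1) (n+1), (1 - η j)
        = (∑ k ∈ Finset.Icc n₀ n, τ * η k ^ 2 * ∏ j ∈ Finset.Icc (k+1) n, (1 - η j))
          * (1 - η (n+1)) := by
      rw [Finset.sum_mul]
      apply Finset.sum_congr rfl
      intro k hk
      have hk' : k + 1 ≤ n + 1 := by
        have := (Finset.mem_Icc.mp hk).2; omega
      rw [Finset.prod_Icc_succ_top hk']
      ring
    rw [hsum]
    ring


private lemma chungPhi_nonneg {γ x : ℝ} (hx : 1 ≤ x) : 0 ≤ chungPhi γ x := by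
  unfold chungPhi
  split_ifs with h
  · exact Real.log_nonneg hx
  · exact chungPhi_aux_nonneg hx h

private lemma prod_bound {c : ℝ} (hc : 0 < c) (η : ℕ → ℝ) (n₀ a n : ℕ)
    (h2 : 2 ≤ n₀) (ha : n₀ ≤ a) (han : a ≤ n + 1)
    (hηeq : ∀ k : ℕ, 1 ≤ k → η k = c / k)
    (hη1 : ∀ k, n₀ ≤ k → η k ≤ 1) :
    ∏ j ∈ Finset.Icc a n, (1 - η j) ≤ ((a:ℝ)/((n:ℝ)+1)) ^ c := by
  calc ∏ j ∈ Finset.Icc a n, (1 - η j)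
      ≤ ∏ j ∈ Finset.Icc a n, ((j:ℝ)/((j:ℝ)+1)) ^ c := by
        apply Finset.prod_le_prod
        · intro j hj
          have := hη1 j (le_trans ha (Finset.mem_Icc.mp hj).1)
          linarith
        · intro j hj
          have hj1 : n₀ ≤ j := le_trans ha (Finset.mem_Icc.mp hj).1
          have hj2 : 1 ≤ j := by omega
          rw [hηeq j hj2]
          exact key_pointwise hc (by exact_mod_cast hj2)
    _ = (∏ j ∈ Finset.Icc a n, ((j:ℝ)/((j:ℝ)+1))) ^ c :=
        Real.finset_prod_rpow _ _ (fun j _ => by positivity) c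
    _ = ((a:ℝ)/((n:ℝ)+1)) ^ c := by rw [tel_prod n a (by omega) han]

private lemma prod_bound' {c : ℝ} (hc : 1 ≤ c) (η : ℕ → ℝ) (n₀ a n : ℕ)
    (h2 : 2 ≤ n₀) (ha : n₀ + 1 ≤ a) (han : a ≤ n + 1) (hn : 1 ≤ n)
    (hηeq : ∀ k : ℕ, 1 ≤ k → η k = c / k)
    (hη1 : ∀ k, n₀ ≤ k → η k ≤ 1) :
    ∏ j ∈ Finset.Icc a n, (1 - η j) ≤ (((a:ℝ)-1)/(n:ℝ)) ^ c := by
  calc ∏ j ∈ Finset.Icc a n, (1 - η j)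
      ≤ ∏ j ∈ Finset.Icc a n, (((j:ℝ)-1)/(j:ℝ)) ^ c := by
        apply Finset.prod_le_prod
        · intro j hj
          have := hη1 j (by have := (Finset.mem_Icc.mp hj).1; omega)
          linarith
        · intro j hj
          have hj1 : n₀ + 1 ≤ j := le_trans ha (Finset.mem_Icc.mp hj).1
          have hj2 : 1 ≤ j := by omega
          rw [hηeq j hj2]
          exact key_pointwise' hc (by exact_mod_cast hj2)
    _ = (∏ j ∈ Finset.Icc a n, (((j:ℝ)-1)/(j:ℝ))) ^ c := by
        refine Real.finset_prod_rpow _ _ (fun j hj => ?_) c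
        have hj1 : n₀ + 1 ≤ j := le_trans ha (Finset.mem_Icc.mp hj).1
        have : (1:ℝ) ≤ (j:ℝ) := by exact_mod_cast Nat.one_le_cast.mpr (by omega)
        have : (0:ℝ) < (j:ℝ) := by linarith
        apply div_nonneg _ this.le
        linarith
    _ = (((a:ℝ)-1)/(n:ℝ)) ^ c := by rw [tel_prod' n a hn (by omega) han]

private lemma numeric_all {c x N A B KC xg : ℝ} (hc2 : 2 < c) (hcx : c ≤ x) (hx2 : 2 ≤ x)
    (hN : 2*x ≤ N) (hA1 : 1 ≤ A) (hB1 : 1 ≤ B) (hBeq : B = A * N) (hxg : 1 ≤ xg)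
    (hKC : 1 + c * ((N - x)/((N+1)*x)) ≤ KC) :
    A + (B - xg)/(c-1) ≤ KC * ((B-1)/(c-1)) := by
  have hx0 : (0:ℝ) < x := by linarith
  have hN0 : (0:ℝ) < N := by linarith
  have hN1 : (1:ℝ) ≤ N := by linarith
  have hd2 : (0:ℝ) < c - 1 := by linarith
  have hc0 : (0:ℝ) < c := by linarith
  have hphi : (0:ℝ) ≤ (B-1)/(c-1) := div_nonneg (by linarith) hd2.le
  have hBA : A * (N-1) ≤ B - 1 := by
    have e : A * (N-1) = A * N - A := by ring
    rw [hBeq, e]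
    linarith
  have h2 : (c-1) * (x * (N+1)) ≤ c * ((N-x)*(N-1)) := by
    have p1 : (0:ℝ) ≤ c * N * (N - 2*x) := by
      apply mul_nonneg (mul_nonneg hc0.le hN0.le)
      linarith
    have p2 : (0:ℝ) ≤ N * (x - c) := by
      apply mul_nonneg hN0.le
      linarith
    nlinarith [p1, p2]
  have hkey : A ≤ (c * ((N - x)/((N+1)*x))) * ((B-1)/(c-1)) := by
    have h4 : A * ((c-1) * (x * (N+1))) ≤ A * (c * ((N-x)*(N-1))) :=
      mul_le_mul_of_nonneg_left h2 (by linarith)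
    have h5 : (c * (N-x)) * (A * (N-1)) ≤ (c * (N-x)) * (B-1) := by
      apply mul_le_mul_of_nonneg_left hBA
      apply mul_nonneg hc0.le
      linarith
    have hne1 : ((N+1)*x) ≠ 0 := by positivity
    have hne2 : c - 1 ≠ 0 := ne_of_gt hd2
    have hid : (c * ((N - x)/((N+1)*x))) * ((B-1)/(c-1))
        = (c * (N - x) * (B-1)) / (((N+1)*x) * (c-1)) := by
      field_simp
    rw [hid, le_div_iff₀ (by positivity)]
    nlinarith [h4, h5]
  have e1 : (B - xg)/(c-1) ≤ (B-1)/(c-1) :=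
    div_le_div_of_nonneg_right (by linarith) hd2.le
  have e2 : (1 + c * ((N - x)/((N+1)*x))) * ((B-1)/(c-1)) ≤ KC * ((B-1)/(c-1)) :=
    mul_le_mul_of_nonneg_right hKC hphi
  have e3 : (1 + c * ((N - x)/((N+1)*x))) * ((B-1)/(c-1))
      = (B-1)/(c-1) + (c * ((N - x)/((N+1)*x))) * ((B-1)/(c-1)) := by ring
  rw [e3] at e2
  linarith

theorem chung_lemma_alpha_one (α c τ : ℝ) (hα : 0 < α) (hα1 : α ≤ 1)
    (hc : 0 < c) (hτ : 0 < τ) (η s : ℕ → ℝ)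
    (hη : ∀ n : ℕ, 1 ≤ n → η n = c * (n : ℝ) ^ (-α))
    (hs0 : ∀ n, 0 ≤ s n)
    (hrec : ∀ n : ℕ, 1 ≤ n → s (n + 1) ≤ (1 - η n) * s n + τ * η n ^ 2)
    (n₀ : ℕ) (hn₀ : 1 < n₀) (hn₀le : ∀ n, n₀ ≤ n → η n ≤ 1)
    (hn₀min : ∀ m : ℕ, 1 < m → (∀ n, m ≤ n → η n ≤ 1) → n₀ ≤ m)
    (t : ℝ) (ht : t = 1 - (2 : ℝ) ^ (α - 1))
    (hαone : α = 1) :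
    ∀ n : ℕ, 2 * n₀ ≤ n →
      s (n + 1) ≤ s n₀ * ((n₀ : ℝ) / ((n : ℝ) + 1)) ^ c
        + τ * c ^ 2 / ((n : ℝ) + 1) ^ c * (1 + 1 / (n₀ : ℝ)) ^ c * chungPhi (c - 1) (n : ℝ) := by
  subst hαone
  -- η is c / n
  have hηeq : ∀ k : ℕ, 1 ≤ k → η k = c / k := by
    intro k hk
    rw [hη k hk, Real.rpow_neg_one, div_eq_mul_inv]
  have h2n₀ : 2 ≤ n₀ := hn₀
  have hn₀R : (2:ℝ) ≤ (n₀:ℝ) := by exact_mod_cast h2n₀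
  have hn₀pos : (0:ℝ) < (n₀:ℝ) := by linarith
  have hcn₀ : c ≤ (n₀:ℝ) := by
    have h := hn₀le n₀ le_rfl
    rw [hηeq n₀ (by omega)] at h
    rwa [div_le_one hn₀pos] at h
  intro n hn
  have hnn₀ : n₀ ≤ n := by omega
  have hn1 : 1 ≤ n := by omega
  have hN4 : (4:ℝ) ≤ (n:ℝ) := by
    have : 4 ≤ n := by omega
    exact_mod_cast this
  have hNpos : (0:ℝ) < (n:ℝ) := by linarith
  have hN2n₀ : 2 * (n₀:ℝ) ≤ (n:ℝ) := by exact_mod_cast hn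
  -- Gronwall
  have hG := gronwall η s τ hrec n₀ (by omega) hn₀le n hnn₀
  -- first term
  have hP : s n₀ * ∏ j ∈ Finset.Icc n₀ n, (1 - η j)
      ≤ s n₀ * ((n₀:ℝ)/((n:ℝ)+1)) ^ c :=
    mul_le_mul_of_nonneg_left
      (prod_bound hc η n₀ n₀ n h2n₀ le_rfl (by omega) hηeq hn₀le) (hs0 n₀)
  -- second term
  have hQ : ∑ k ∈ Finset.Icc n₀ n, τ * η k ^ 2 * ∏ j ∈ Finset.Icc (k+1) n, (1 - η j)
      ≤ τ * c ^ 2 / ((n:ℝ) + 1) ^ c * (1 + 1 / (n₀:ℝ)) ^ c * chungPhi (c - 1) (n:ℝ) := by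
    have hconst : (0:ℝ) ≤ τ * c ^ 2 / ((n:ℝ) + 1) ^ c * (1 + 1 / (n₀:ℝ)) ^ c := by positivity
    rcases le_or_gt c 2 with hc2 | hc2
    · -- case c ≤ 2
      set f : ℕ → ℝ := fun k => chungPhi (c-1) ((k:ℝ)-1) with hf
      have hterm : ∀ k ∈ Finset.Icc n₀ n, τ * η k ^ 2 * ∏ j ∈ Finset.Icc (k+1) n, (1 - η j)
          ≤ τ * c ^ 2 / ((n:ℝ) + 1) ^ c * (1 + 1 / (n₀:ℝ)) ^ c * (f (k+1) - f k) := by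
        intro k hk
        obtain ⟨hk1, hk2⟩ := Finset.mem_Icc.mp hk
        have hkR : (n₀:ℝ) ≤ (k:ℝ) := by exact_mod_cast hk1
        have hkR2 : (2:ℝ) ≤ (k:ℝ) := le_trans hn₀R hkR
        have hkpos : (0:ℝ) < (k:ℝ) := by linarith
        have hprod := prod_bound hc η n₀ (k+1) n h2n₀ (by omega) (by omega) hηeq hn₀le
        have hcast : (((k+1:ℕ)):ℝ) = (k:ℝ)+1 := by push_cast; ring
        rw [hcast] at hprod
        have hprodnn : (0:ℝ) ≤ ∏ j ∈ Finset.Icc (k+1) n, (1 - η j) := by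
          apply Finset.prod_nonneg
          intro j hj
          have := hn₀le j (by have := (Finset.mem_Icc.mp hj).1; omega)
          linarith
        have hΔ : ((k:ℝ))^(c-2) ≤ f (k+1) - f k := by
          have hps := phi_step hc hc2 hkR2
          have e1 : f (k+1) = chungPhi (c-1) (k:ℝ) := by
            rw [hf]
            push_cast
            ring_nf
          have e2 : f k = chungPhi (c-1) ((k:ℝ)-1) := rfl
          rw [e1, e2]
          exact hps
        have hK2 : ((k:ℝ)+1)^c ≤ (1+1/(n₀:ℝ))^c * (k:ℝ)^c := by
          have e3 : (k:ℝ)+1 = (1+1/(k:ℝ)) * (k:ℝ) := by field_simp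
          rw [e3, Real.mul_rpow (by positivity) (by positivity)]
          apply mul_le_mul_of_nonneg_right _ (Real.rpow_nonneg hkpos.le c)
          apply Real.rpow_le_rpow (by positivity) _ hc.le
          have : 1/(k:ℝ) ≤ 1/(n₀:ℝ) := one_div_le_one_div_of_le hn₀pos hkR
          linarith
        have hK3 : (k:ℝ)^c / (k:ℝ)^2 = (k:ℝ)^(c-2) := by
          rw [show ((k:ℝ))^(2:ℕ) = (k:ℝ)^((2:ℕ):ℝ) from (Real.rpow_natCast _ 2).symm,
            ← Real.rpow_sub hkpos]
          norm_num
        rw [hηeq k (by omega)]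
        calc τ * (c / (k:ℝ)) ^ 2 * ∏ j ∈ Finset.Icc (k+1) n, (1 - η j)
            ≤ τ * (c / (k:ℝ)) ^ 2 * (((k:ℝ)+1)/((n:ℝ)+1)) ^ c :=
              mul_le_mul_of_nonneg_left hprod (by positivity)
          _ = τ * c ^ 2 / ((n:ℝ)+1) ^ c * (((k:ℝ)+1) ^ c / (k:ℝ)^2) := by
              rw [Real.div_rpow (by positivity) (by positivity)]
              field_simp
          _ ≤ τ * c ^ 2 / ((n:ℝ)+1) ^ c * ((1+1/(n₀:ℝ)) ^ c * (k:ℝ)^c / (k:ℝ)^2) := by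
              apply mul_le_mul_of_nonneg_left _ (by positivity)
              apply div_le_div_of_nonneg_right hK2 (by positivity)
          _ = τ * c ^ 2 / ((n:ℝ)+1) ^ c * (1+1/(n₀:ℝ)) ^ c * ((k:ℝ)^c / (k:ℝ)^2) := by ring
          _ = τ * c ^ 2 / ((n:ℝ)+1) ^ c * (1+1/(n₀:ℝ)) ^ c * (k:ℝ)^(c-2) := by rw [hK3]
          _ ≤ τ * c ^ 2 / ((n:ℝ)+1) ^ c * (1+1/(n₀:ℝ)) ^ c * (f (k+1) - f k) :=
              mul_le_mul_of_nonneg_left hΔ hconst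
      calc ∑ k ∈ Finset.Icc n₀ n, τ * η k ^ 2 * ∏ j ∈ Finset.Icc (k+1) n, (1 - η j)
          ≤ ∑ k ∈ Finset.Icc n₀ n,
              τ * c ^ 2 / ((n:ℝ) + 1) ^ c * (1 + 1 / (n₀:ℝ)) ^ c * (f (k+1) - f k) :=
            Finset.sum_le_sum hterm
        _ = τ * c ^ 2 / ((n:ℝ) + 1) ^ c * (1 + 1 / (n₀:ℝ)) ^ c * (f (n+1) - f n₀) := by
            rw [← Finset.mul_sum, tel_sum f n n₀ (by omega)]
        _ ≤ τ * c ^ 2 / ((n:ℝ) + 1) ^ c * (1 + 1 / (n₀:ℝ)) ^ c * chungPhi (c - 1) (n:ℝ) := by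
            apply mul_le_mul_of_nonneg_left _ hconst
            have h1 : f (n+1) = chungPhi (c-1) (n:ℝ) := by
              rw [hf]
              push_cast
              ring_nf
            have h2 : 0 ≤ f n₀ := by
              apply chungPhi_nonneg
              have : (2:ℝ) ≤ (n₀:ℝ) := hn₀R
              linarith
            rw [← h1]
            linarith
    · -- case 2 < c
      have hc1 : (1:ℝ) ≤ c := by linarith
      have hd2 : (0:ℝ) < c - 1 := by linarith
      have hNR1 : (1:ℝ) ≤ (n:ℝ) := by linarith
      have hNcpos : (0:ℝ) < ((n:ℝ)) ^ c := Real.rpow_pos_of_pos hNpos c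
      -- per-term bound with sharper product bound
      have hterm : ∀ k ∈ Finset.Icc n₀ n, τ * η k ^ 2 * ∏ j ∈ Finset.Icc (k+1) n, (1 - η j)
          ≤ τ * c ^ 2 / ((n:ℝ)) ^ c * (k:ℝ) ^ (c-2) := by
        intro k hk
        obtain ⟨hk1, hk2⟩ := Finset.mem_Icc.mp hk
        have hkR : (n₀:ℝ) ≤ (k:ℝ) := by exact_mod_cast hk1
        have hkR2 : (2:ℝ) ≤ (k:ℝ) := le_trans hn₀R hkR
        have hkpos : (0:ℝ) < (k:ℝ) := by linarith
        have hprod := prod_bound' hc1 η n₀ (k+1) n h2n₀ (by omega) (by omega) hn1 hηeq hn₀le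
        have hcast : (((k+1:ℕ)):ℝ) - 1 = (k:ℝ) := by push_cast; ring
        rw [hcast] at hprod
        have hK3 : (k:ℝ)^c / (k:ℝ)^2 = (k:ℝ)^(c-2) := by
          rw [show ((k:ℝ))^(2:ℕ) = (k:ℝ)^((2:ℕ):ℝ) from (Real.rpow_natCast _ 2).symm,
            ← Real.rpow_sub hkpos]
          norm_num
        rw [hηeq k (by omega)]
        calc τ * (c / (k:ℝ)) ^ 2 * ∏ j ∈ Finset.Icc (k+1) n, (1 - η j)
            ≤ τ * (c / (k:ℝ)) ^ 2 * ((k:ℝ)/((n:ℝ))) ^ c :=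
              mul_le_mul_of_nonneg_left hprod (by positivity)
          _ = τ * c ^ 2 / ((n:ℝ)) ^ c * ((k:ℝ) ^ c / (k:ℝ)^2) := by
              rw [Real.div_rpow (by positivity) (by positivity)]
              field_simp
          _ = τ * c ^ 2 / ((n:ℝ)) ^ c * (k:ℝ) ^ (c-2) := by rw [hK3]
      -- bound the sum of k^(c-2)
      obtain ⟨m, rfl⟩ : ∃ m, n = m + 1 := ⟨n-1, by omega⟩
      have hsum : ∑ k ∈ Finset.Icc n₀ (m+1), (k:ℝ) ^ (c-2)
          ≤ ((m+1:ℕ):ℝ) ^ (c-2) + (((m+1:ℕ):ℝ) ^ (c-1) - (n₀:ℝ) ^ (c-1))/(c-1) := by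
        rw [Finset.sum_Icc_succ_top (show n₀ ≤ m+1 by omega)]
        have h1 : ∑ k ∈ Finset.Icc n₀ m, (k:ℝ) ^ (c-2)
            ≤ (((m+1:ℕ):ℝ) ^ (c-1) - (n₀:ℝ) ^ (c-1))/(c-1) := by
          set G : ℕ → ℝ := fun k => (k:ℝ) ^ (c-1) / (c-1) with hG
          calc ∑ k ∈ Finset.Icc n₀ m, (k:ℝ) ^ (c-2)
              ≤ ∑ k ∈ Finset.Icc n₀ m, (G (k+1) - G k) := by
                apply Finset.sum_le_sum
                intro k hk
                obtain ⟨hk1, hk2⟩ := Finset.mem_Icc.mp hk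
                have hkR1 : (1:ℝ) ≤ (k:ℝ) := by
                  have : 1 ≤ k := by omega
                  exact_mod_cast this
                have hps := pow_step (show (1:ℝ) ≤ c - 1 by linarith) hkR1
                have e1 : G (k+1) - G k = (((k:ℝ)+1) ^ (c-1) - (k:ℝ) ^ (c-1))/(c-1) := by
                  rw [hG]
                  push_cast
                  ring
                rw [e1]
                have e2 : c - 2 = (c-1) - 1 := by ring
                rw [e2]
                exact hps
            _ = G (m+1) - G n₀ := tel_sum G m n₀ (by omega)
            _ = (((m+1:ℕ):ℝ) ^ (c-1) - (n₀:ℝ) ^ (c-1))/(c-1) := by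
                rw [hG]
                push_cast
                ring
        linarith
      -- numeric final step
      set N : ℝ := ((m+1:ℕ):ℝ) with hNdef
      have hNeq : N = (m:ℝ) + 1 := by rw [hNdef]; push_cast; ring
      set A : ℝ := N ^ (c-2) with hA
      set B : ℝ := N ^ (c-1) with hB
      have hNpos' : (0:ℝ) < N := hNpos
      have hB_eq : B = A * N := by
        rw [hB, hA, show c-1 = (c-2)+1 by ring, Real.rpow_add hNpos', Real.rpow_one]
      have hA1 : (1:ℝ) ≤ A := Real.one_le_rpow (by linarith) (by linarith)
      have hn₀γ : (1:ℝ) ≤ (n₀:ℝ) ^ (c-1) := Real.one_le_rpow (by linarith) (by linarith)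
      have hB1 : (1:ℝ) ≤ B := Real.one_le_rpow (by linarith) (by linarith)
      have hφeq : chungPhi (c-1) N = (B - 1)/(c-1) := by
        rw [chungPhi, if_neg (by intro h; exact absurd h (by linarith) : ¬ c - 1 = 0), hB]
      have hφpos : (0:ℝ) ≤ (B-1)/(c-1) := div_nonneg (by linarith) hd2.le
      set KK : ℝ := (N/(N+1)) * (((n₀:ℝ)+1)/(n₀:ℝ)) with hKK
      have hKKpos : (0:ℝ) < KK := by rw [hKK]; positivity
      have hKKsub : KK - 1 = (N - (n₀:ℝ))/((N+1)*(n₀:ℝ)) := by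
        rw [hKK]
        field_simp
        ring
      have hKKge : 1 + c * (KK - 1) ≤ KK ^ c := by
        have h := one_add_mul_self_le_rpow_one_add (show (-1:ℝ) ≤ KK - 1 by linarith) hc1
        rwa [show 1 + (KK - 1) = KK by ring] at h
      have hSKK : A + (B - (n₀:ℝ) ^ (c-1))/(c-1) ≤ KK ^ c * ((B-1)/(c-1)) := by
        refine numeric_all hc2 hcn₀ hn₀R hN2n₀ hA1 hB1 hB_eq hn₀γ ?_
        rw [← hKKsub]
        exact hKKge
      have hKKfinal : τ * c ^ 2 / N ^ c * (KK ^ c * ((B-1)/(c-1)))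
          = τ * c ^ 2 / (N+1) ^ c * (1+1/(n₀:ℝ)) ^ c * ((B-1)/(c-1)) := by
        have e1 : KK ^ c = (N/(N+1)) ^ c * (((n₀:ℝ)+1)/(n₀:ℝ)) ^ c := by
          rw [hKK]
          exact Real.mul_rpow (by positivity) (by positivity)
        have e2 : (N/(N+1)) ^ c = N ^ c/(N+1) ^ c :=
          Real.div_rpow hNpos.le (by positivity) c
        have e3 : (1+1/(n₀:ℝ)) = ((n₀:ℝ)+1)/(n₀:ℝ) := by field_simp
        have hN1cpos : (0:ℝ) < (N+1) ^ c := Real.rpow_pos_of_pos (by linarith) c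
        rw [e1, e2, e3]
        field_simp
      calc ∑ k ∈ Finset.Icc n₀ (m+1), τ * η k ^ 2 * ∏ j ∈ Finset.Icc (k+1) (m+1), (1 - η j)
          ≤ ∑ k ∈ Finset.Icc n₀ (m+1), τ * c ^ 2 / N ^ c * (k:ℝ) ^ (c-2) :=
            Finset.sum_le_sum hterm
        _ = τ * c ^ 2 / N ^ c * ∑ k ∈ Finset.Icc n₀ (m+1), (k:ℝ) ^ (c-2) := by
            rw [Finset.mul_sum]
        _ ≤ τ * c ^ 2 / N ^ c * (A + (B - (n₀:ℝ) ^ (c-1))/(c-1)) :=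
            mul_le_mul_of_nonneg_left hsum (by positivity)
        _ ≤ τ * c ^ 2 / N ^ c * (KK ^ c * ((B-1)/(c-1))) :=
            mul_le_mul_of_nonneg_left hSKK (by positivity)
        _ = τ * c ^ 2 / (N+1) ^ c * (1+1/(n₀:ℝ)) ^ c * ((B-1)/(c-1)) := hKKfinal
        _ = τ * c ^ 2 / (N+1) ^ c * (1+1/(n₀:ℝ)) ^ c * chungPhi (c-1) N := by rw [hφeq]
  calc s (n+1) ≤ _ := hG
    _ ≤ _ := add_le_add hP hQ
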